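/- arXiv:2002.04912 — 3 statements merged into one kernel-verified Lean document; each statement's English description precedes it below -/
import Mathlib

section
/- Let p be a prime, let n, k, l be positive integers with l | k and k/l even, and set d = gcd(n,k), e = gcd(n,l), L = lcm(d,l). Suppose d/e is even. Then the set {x ∈ 𝔽_{p^n} : S_l^k(x) = 0} equals 𝔽_{p^d} if p divides k/L, and equals {x + x^{p^e} : x ∈ 𝔽_{p^d}} otherwise. Consequently its cardinality is p^d if p divides k/L, and p^{d−e} otherwise. -/
open Finset

/-- `Tmap p u v x = Σ_{i=0}^{v/u - 1} x^{p^{u i}}` on the algebraic closure of `𝔽_p`. -/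
noncomputable def Tmap (p : ℕ) [Fact p.Prime] (u v : ℕ) (x : AlgebraicClosure (ZMod p)) :
    AlgebraicClosure (ZMod p) :=
  ∑ i ∈ Finset.range (v / u), x ^ p ^ (u * i)

/-- `Smap p u v x = Σ_{i=0}^{v/u - 1} (-1)^i x^{p^{u i}}` on the algebraic closure of `𝔽_p`. -/
noncomputable def Smap (p : ℕ) [Fact p.Prime] (u v : ℕ) (x : AlgebraicClosure (ZMod p)) :
    AlgebraicClosure (ZMod p) :=
  ∑ i ∈ Finset.range (v / u), (-1 : AlgebraicClosure (ZMod p)) ^ i * x ^ p ^ (u * i)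

/-- `Ffield p m` is the subfield `𝔽_{p^m} = {x : x^{p^m} = x}` of the algebraic closure of `𝔽_p`. -/
def Ffield (p : ℕ) [Fact p.Prime] (m : ℕ) : Set (AlgebraicClosure (ZMod p)) :=
  {x | x ^ p ^ m = x}

set_option linter.unusedSectionVars false

section helpers
variable {K : Type*} [Field K] (p : ℕ) [Fact p.Prime] [CharP K p]

lemma pow_pow_mul (x : K) {a : ℕ} (h : x ^ p ^ a = x) (s : ℕ) : x ^ p ^ (a * s) = x := by
  induction s with
  | zero => simp
  | succ s ih =>
    have : p ^ (a * (s+1)) = p ^ (a*s) * p ^ a := by ring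
    rw [this, pow_mul, ih, h]

lemma pow_pow_dvd (x : K) {a b : ℕ} (h : x ^ p ^ a = x) (hab : a ∣ b) : x ^ p ^ b = x := by
  obtain ⟨s, rfl⟩ := hab; exact pow_pow_mul p x h s

lemma pow_pow_add_mul (x : K) {d0 : ℕ} (h : x ^ p ^ d0 = x) (a s : ℕ) :
    x ^ p ^ (a + d0 * s) = x ^ p ^ a := by
  rw [pow_add, mul_comm (p^a), pow_mul, pow_pow_mul p x h s]

lemma pow_pow_gcd (x : K) : ∀ a b : ℕ, x ^ p ^ a = x → x ^ p ^ b = x → x ^ p ^ (Nat.gcd a b) = x := by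
  intro a b
  induction a, b using Nat.gcd.induction with
  | H0 n => intro _ hb; simpa using hb
  | H1 m n hm ih =>
    intro ha hb
    rw [Nat.gcd_rec]
    refine ih ?_ ha
    have hn : x ^ p ^ (n % m + m * (n / m)) = x ^ p ^ (n % m) := pow_pow_add_mul p x ha _ _
    rw [Nat.mod_add_div] at hn
    rw [← hn, hb]

lemma neg_one_pow_p_pow (s : ℕ) : ((-1 : K)) ^ p ^ s = -1 := by
  have := map_neg (iterateFrobenius K p s) 1
  simpa [iterateFrobenius_def] using this

/-- telescoping: S + σ^l S = x - x^{p^{l*m}} for even m. -/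
lemma tel (l m : ℕ) (hm : Even m) (x : K) :
    (∑ i ∈ range m, (-1:K)^i * x ^ p ^ (l*i)) ^ p ^ l
      + ∑ i ∈ range m, (-1:K)^i * x ^ p ^ (l*i)
      = x - x ^ p ^ (l*m) := by
  have hfrob : (∑ i ∈ range m, (-1:K)^i * x ^ p ^ (l*i)) ^ p ^ l
      = ∑ i ∈ range m, (-1:K)^i * x ^ p ^ (l*(i+1)) := by
    have := map_sum (iterateFrobenius K p l) (fun i => (-1:K)^i * x ^ p ^ (l*i)) (range m)
    rw [iterateFrobenius_def] at this
    rw [this]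
    refine Finset.sum_congr rfl fun i _ => ?_
    rw [iterateFrobenius_def, mul_pow, pow_right_comm, neg_one_pow_p_pow, ← pow_mul,
      ← pow_add, mul_add, mul_one]
  rw [hfrob, add_comm, ← Finset.sum_add_distrib]
  have : ∀ i ∈ range m, ((-1:K)^i * x ^ p ^ (l*i) + (-1:K)^i * x ^ p ^ (l*(i+1)))
      = (fun j => (-1:K)^j * x ^ p ^ (l*j)) i - (fun j => (-1:K)^j * x ^ p ^ (l*j)) (i+1) := by
    intro i _
    simp only [pow_succ]
    ring
  rw [Finset.sum_congr rfl this, Finset.sum_range_sub']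
  simp [hm.neg_one_pow]

end helpers

section periodic
variable {M : Type*} [AddCommMonoid M]

lemma periodic_shift (g : ℕ → M) (B : ℕ) (hg : ∀ i, g (i + B) = g i) (t i : ℕ) :
    g (t * B + i) = g i := by
  induction t with
  | zero => simp
  | succ t ih =>
    have : (t+1) * B + i = (t * B + i) + B := by ring
    rw [this, hg, ih]

lemma sum_periodic (g : ℕ → M) (B : ℕ) (hg : ∀ i, g (i + B) = g i) (T : ℕ) :
    ∑ i ∈ range (T * B), g i = T • ∑ j ∈ range B, g j := by
  induction T with
  | zero => simp
  | succ T ih =>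
    have h1 : T * B ≤ (T+1) * B := by nlinarith
    have := Finset.sum_Ico_consecutive g (Nat.zero_le (T*B)) h1
    rw [Finset.range_eq_Ico, ← this, ← Finset.range_eq_Ico, ih, Finset.sum_Ico_eq_sum_range]
    have h2 : (T+1)*B - T*B = B := by ring_nf; omega
    rw [h2, succ_nsmul]
    congr 1
    exact Finset.sum_congr rfl fun i _ => periodic_shift g B hg T i
end periodic

section perm
variable {K : Type*} [Field K] (p : ℕ) [Fact p.Prime] [CharP K p]

lemma block_sum (x : K) {e0 B c T : ℕ} (hx : x ^ p ^ (e0*B) = x) (hB : Even B) :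
    ∑ i ∈ range (T * B), (-1:K)^i * x ^ p ^ (e0*c*i)
      = T • ∑ j ∈ range B, (-1:K)^j * x ^ p ^ (e0*c*j) := by
  refine sum_periodic _ B (fun i => ?_) T
  have h1 : e0*c*(i+B) = e0*c*i + (e0*B)*c := by ring
  rw [h1, pow_pow_add_mul p x hx, pow_add, hB.neg_one_pow, mul_one]

lemma perm_sum (x : K) {e0 B c : ℕ} (hx : x ^ p ^ (e0*B) = x) (hB : Even B) (hBpos : 0 < B)
    (hco : Nat.Coprime c B) :
    ∑ j ∈ range B, (-1:K)^j * x ^ p ^ (e0*c*j)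
      = ∑ j ∈ range B, (-1:K)^j * x ^ p ^ (e0*j) := by
  have hcodd : Odd c := by
    rw [← Nat.not_even_iff_odd]
    intro hc
    have h2 : 2 ∣ Nat.gcd c B := Nat.dvd_gcd hc.two_dvd hB.two_dvd
    rw [hco] at h2; omega
  have hmem : ∀ a : ℕ, a ∈ range B → (c * a) % B ∈ range B := by
    intro a _; exact Finset.mem_range.2 (Nat.mod_lt _ hBpos)
  have hinj : ∀ a₁ ∈ range B, ∀ a₂ ∈ range B,
      (c * a₁) % B = (c * a₂) % B → a₁ = a₂ := by
    intro a₁ h₁ a₂ h₂ h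
    have : a₁ ≡ a₂ [MOD B] :=
      Nat.ModEq.cancel_left_of_coprime hco.symm h
    have := this.eq_of_lt_of_lt (Finset.mem_range.1 h₁) (Finset.mem_range.1 h₂)
    exact this
  refine Finset.sum_bij (fun a _ => (c * a) % B) hmem (fun a₁ h₁ a₂ h₂ h => hinj a₁ h₁ a₂ h₂ h)
    ?_ ?_
  · intro b hb
    obtain ⟨a, ha, h⟩ := Finset.surj_on_of_inj_on_of_card_le (fun a _ => (c * a) % B) hmem
      (fun a₁ a₂ h₁ h₂ h => hinj a₁ h₁ a₂ h₂ h) le_rfl b hb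
    exact ⟨a, ha, h.symm⟩
  · intro a _
    have hsign : (-1:K) ^ ((c*a) % B) = (-1:K) ^ a := by
      have h1 : (-1:K) ^ (c*a) = (-1:K) ^ ((c*a) % B) := by
        conv_lhs => rw [← Nat.mod_add_div (c*a) B]
        rw [pow_add, pow_mul, hB.neg_one_pow, one_pow, mul_one]
      rw [← h1, pow_mul, hcodd.neg_one_pow]
    have hpow : x ^ p ^ (e0*c*a) = x ^ p ^ (e0 * ((c*a) % B)) := by
      have h2 : e0*c*a = e0 * ((c*a) % B) + (e0*B) * ((c*a)/B) := by
        conv_lhs => rw [mul_assoc, ← Nat.mod_add_div (c*a) B]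
        ring
      rw [h2, pow_pow_add_mul p x hx]
    rw [hsign, hpow]
end perm

section counting
open Polynomial
variable {K : Type*} [Field K] [DecidableEq K]

lemma eval_zero_subset (f : K[X]) (hf : f ≠ 0) :
    {x : K | f.eval x = 0} = ↑f.roots.toFinset := by
  ext x; simp [Polynomial.mem_roots', hf, Polynomial.IsRoot]

lemma eval_zero_finite (f : K[X]) (hf : f ≠ 0) : {x : K | f.eval x = 0}.Finite := by
  rw [eval_zero_subset f hf]; exact f.roots.toFinset.finite_toSet

lemma eval_zero_ncard (f : K[X]) (hf : f ≠ 0) :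
    {x : K | f.eval x = 0}.ncard ≤ f.natDegree := by
  rw [eval_zero_subset f hf, Set.ncard_coe_finset]
  exact le_trans (Multiset.toFinset_card_le _) (Polynomial.card_roots' f)

end counting

section fpoly
open Polynomial
variable (K : Type*) [Field K] (p : ℕ) [Fact p.Prime] [CharP K p]

/-- the polynomial `X^{p^m} - X` -/
noncomputable def Fpoly (m : ℕ) : K[X] := X ^ p ^ m - X

lemma p_pow_ne_one {m : ℕ} (hm : 0 < m) : p ^ m ≠ 1 := by
  have h1 := (Fact.out : p.Prime).two_le
  have h2 : 2 ^ m ≤ p ^ m := Nat.pow_le_pow_left h1 m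
  have h3 : 2 ^ 1 ≤ 2 ^ m := Nat.pow_le_pow_right (by norm_num) hm
  omega

lemma Fpoly_ne_zero {m : ℕ} (hm : 0 < m) : (Fpoly K p m : K[X]) ≠ 0 := by
  intro h
  have h2 : (Fpoly K p m : K[X]).coeff (p ^ m) = 1 := by
    have hpm := p_pow_ne_one p hm
    simp [Fpoly, Polynomial.coeff_X_pow, Polynomial.coeff_X, hpm, Ne.symm hpm]
  rw [h] at h2
  simp at h2

lemma Fpoly_natDegree_le (m : ℕ) : (Fpoly K p m : K[X]).natDegree ≤ p ^ m := by
  refine le_trans (Polynomial.natDegree_sub_le _ _) ?_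
  simp [Polynomial.natDegree_X_pow]
  exact Nat.one_le_pow _ _ (Fact.out : p.Prime).pos

lemma Fpoly_eval (m : ℕ) (x : K) : (Fpoly K p m : K[X]).eval x = x ^ p ^ m - x := by
  simp [Fpoly]

/-- the polynomial `Σ_{j<B} (-1)^j X^{p^{e j}}` -/
noncomputable def Qpoly (e0 B : ℕ) : K[X] :=
  ∑ j ∈ range B, C ((-1:K)^j) * X ^ (p ^ (e0*j))

lemma Qpoly_eval (e0 B : ℕ) (x : K) :
    (Qpoly K p e0 B).eval x = ∑ j ∈ range B, (-1:K)^j * x ^ p ^ (e0*j) := by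
  simp [Qpoly, Polynomial.eval_finset_sum]

lemma Qpoly_natDegree_le (e0 B : ℕ) (hB : 0 < B) :
    (Qpoly K p e0 B).natDegree ≤ p ^ (e0*(B-1)) := by
  refine Polynomial.natDegree_sum_le_of_forall_le _ _ fun j hj => ?_
  refine le_trans (Polynomial.natDegree_C_mul_X_pow_le _ _) ?_
  refine Nat.pow_le_pow_right (Fact.out : p.Prime).pos ?_
  have := Finset.mem_range.1 hj
  exact Nat.mul_le_mul_left e0 (by omega)

lemma Qpoly_ne_zero (e0 B : ℕ) (hB : 0 < B) (he0 : 0 < e0) :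
    (Qpoly K p e0 B) ≠ 0 := by
  intro h
  have h2 : (Qpoly K p e0 B).coeff (p ^ (e0*(B-1))) = (-1:K)^(B-1) := by
    rw [Qpoly, Polynomial.finset_sum_coeff]
    rw [Finset.sum_eq_single_of_mem (B-1) (Finset.mem_range.2 (by omega))]
    · rw [Polynomial.coeff_C_mul, Polynomial.coeff_X_pow]; simp
    · intro b hb hbne
      have hne : p ^ (e0*(B-1)) ≠ p ^ (e0*b) := by
        intro heq
        have := Nat.pow_right_injective (Fact.out : p.Prime).two_le heq
        have : B - 1 = b := by
          have := Nat.eq_of_mul_eq_mul_left he0 this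
          omega
        omega
      rw [Polynomial.coeff_C_mul, Polynomial.coeff_X_pow]
      simp [hne]
  rw [h, Polynomial.coeff_zero] at h2
  exact pow_ne_zero (B-1) (neg_ne_zero.2 (one_ne_zero (α := K))) h2.symm

end fpoly

section smap
variable (p : ℕ) [Fact p.Prime]

lemma Smap_tel (l k : ℕ) (hlk : l ∣ k) (hm : Even (k/l)) (x : AlgebraicClosure (ZMod p)) :
    (Smap p l k x) ^ p ^ l + Smap p l k x = x - x ^ p ^ k := by
  unfold Smap
  have := tel p l (k/l) hm x
  rwa [Nat.mul_div_cancel' hlk] at this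

lemma Smap_add (u v : ℕ) (a b : AlgebraicClosure (ZMod p)) :
    Smap p u v (a + b) = Smap p u v a + Smap p u v b := by
  unfold Smap
  rw [← Finset.sum_add_distrib]
  refine Finset.sum_congr rfl fun i _ => ?_
  rw [add_pow_char_pow, mul_add]

lemma Smap_frob (u v s : ℕ) (a : AlgebraicClosure (ZMod p)) :
    Smap p u v (a ^ p ^ s) = (Smap p u v a) ^ p ^ s := by
  unfold Smap
  have := map_sum (iterateFrobenius (AlgebraicClosure (ZMod p)) p s)
    (fun i => (-1 : AlgebraicClosure (ZMod p))^i * a ^ p ^ (u*i)) (range (v/u))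
  rw [iterateFrobenius_def] at this
  rw [this]
  refine Finset.sum_congr rfl fun i _ => ?_
  rw [iterateFrobenius_def, mul_pow, pow_right_comm _ i, neg_one_pow_p_pow, pow_right_comm a]

lemma Ffield_ncard (m : ℕ) (hm : 0 < m) : (Ffield p m).ncard = p ^ m := by
  classical
  have heq : Ffield p m = {x : AlgebraicClosure (ZMod p) | (Fpoly _ p m).eval x = 0} := by
    ext x; simp [Ffield, Fpoly_eval, sub_eq_zero]
  have hfin : (Ffield p m).Finite := by
    rw [heq]; exact eval_zero_finite _ (Fpoly_ne_zero _ p hm)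
  refine le_antisymm ?_ ?_
  · rw [heq]
    exact le_trans (eval_zero_ncard _ (Fpoly_ne_zero _ p hm)) (Fpoly_natDegree_le _ p m)
  · have : Algebra.IsAlgebraic (ZMod p) (GaloisField p m) := inferInstance
    let φa : GaloisField p m →ₐ[ZMod p] AlgebraicClosure (ZMod p) := IsAlgClosed.lift
    have hrange : Set.range φa ⊆ Ffield p m := by
      rintro _ ⟨a, rfl⟩
      haveI : Fintype (GaloisField p m) := Fintype.ofFinite _
      have hcard : Fintype.card (GaloisField p m) = p ^ m := by
        rw [← Nat.card_eq_fintype_card, GaloisField.card p m hm.ne']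
      have ha : a ^ p ^ m = a := by rw [← hcard]; exact FiniteField.pow_card a
      show (φa a) ^ p ^ m = φa a
      rw [← map_pow, ha]
    have hinj : Function.Injective (φa : GaloisField p m → AlgebraicClosure (ZMod p)) :=
      φa.toRingHom.injective
    have h1 : (Set.range φa).ncard = p ^ m := by
      rw [← Set.image_univ, Set.ncard_image_of_injective _ hinj,
        Set.ncard_univ, GaloisField.card p m hm.ne']
    rw [← h1]
    exact Set.ncard_le_ncard hrange hfin

lemma Ffield_finite (m : ℕ) (hm : 0 < m) : (Ffield p m).Finite := by
  classical
  have heq : Ffield p m = {x : AlgebraicClosure (ZMod p) | (Fpoly _ p m).eval x = 0} := by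
    ext x; simp [Ffield, Fpoly_eval, sub_eq_zero]
  rw [heq]; exact eval_zero_finite _ (Fpoly_ne_zero _ p hm)

end smap

theorem stmt9 (p : ℕ) [Fact p.Prime] (n k l : ℕ) (hn : 0 < n) (hk : 0 < k) (hl : 0 < l)
    (hlk : l ∣ k) (hkl : Even (k / l)) (d e L : ℕ)
    (hd : d = Nat.gcd n k) (he : e = Nat.gcd n l) (hL : L = Nat.lcm d l)
    (hde : Even (d / e)) :
    (p ∣ k / L →
      {x | x ∈ Ffield p n ∧ Smap p l k x = 0} = Ffield p d ∧
      {x | x ∈ Ffield p n ∧ Smap p l k x = 0}.ncard = p ^ d) ∧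
    (¬ p ∣ k / L →
      {x | x ∈ Ffield p n ∧ Smap p l k x = 0} = (fun x => x + x ^ p ^ e) '' Ffield p d ∧
      {x | x ∈ Ffield p n ∧ Smap p l k x = 0}.ncard = p ^ (d - e)) := by
  classical
  have hd0 : 0 < d := hd ▸ Nat.gcd_pos_of_pos_left _ hn
  have he0 : 0 < e := he ▸ Nat.gcd_pos_of_pos_left _ hn
  have hdn : d ∣ n := hd ▸ Nat.gcd_dvd_left n k
  have hdk : d ∣ k := hd ▸ Nat.gcd_dvd_right n k
  have hen : e ∣ n := he ▸ Nat.gcd_dvd_left n l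
  have hel : e ∣ l := he ▸ Nat.gcd_dvd_right n l
  have hed : e ∣ d := hd ▸ Nat.dvd_gcd hen (dvd_trans hel hlk)
  have hgdl : Nat.gcd d l = e := by
    rw [hd, he, Nat.gcd_assoc, Nat.gcd_eq_right hlk]
  have hLk : L ∣ k := hL ▸ Nat.lcm_dvd hdk hlk
  have hB2 : Even (d / e) := hde
  have hdeB : d = e * (d / e) := (Nat.mul_div_cancel' hed).symm
  have hlec : l = e * (l / e) := (Nat.mul_div_cancel' hel).symm
  have hB0 : 0 < d / e := Nat.div_pos (Nat.le_of_dvd hd0 hed) he0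
  have hco : Nat.Coprime (l / e) (d / e) := by
    have h1 : 0 < Nat.gcd d l := hgdl ▸ he0
    have h2 := Nat.coprime_div_gcd_div_gcd h1
    rw [hgdl] at h2
    exact h2.symm
  have hLBl : L = (d / e) * l := by
    have h1 : e * L = d * l := by rw [← hgdl, hL]; exact Nat.gcd_mul_lcm d l
    have h2 : e * L = e * ((d / e) * l) := by
      rw [h1]
      calc d * l = (e * (d / e)) * l := congrArg (· * l) hdeB
        _ = e * ((d / e) * l) := by ring
    exact Nat.eq_of_mul_eq_mul_left he0 h2
  have hklTB : k / l = (k / L) * (d / e) := by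
    have h1 : k = l * ((k / L) * (d / e)) := by
      calc k = L * (k / L) := (Nat.mul_div_cancel' hLk).symm
        _ = (d / e * l) * (k / L) := congrArg (· * (k / L)) hLBl
        _ = l * ((k / L) * (d / e)) := by ring
    conv_lhs => rw [h1]
    rw [Nat.mul_div_cancel_left _ hl]
  have hedB1 : e * (d / e - 1) = d - e := by
    rw [Nat.mul_sub, mul_one, ← hdeB]
  -- kernel characterization
  have hSrw : ∀ x : AlgebraicClosure (ZMod p), x ^ p ^ d = x →
      Smap p l k x = ((k / L : ℕ) : AlgebraicClosure (ZMod p)) * Smap p e d x := by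
    intro x hx
    have hx' : x ^ p ^ (e * (d / e)) = x := by rw [← hdeB]; exact hx
    have h1 : Smap p l k x
        = ∑ i ∈ range ((k / L) * (d / e)), (-1 : AlgebraicClosure (ZMod p))^i
            * x ^ p ^ (e * (l / e) * i) := by
      unfold Smap
      rw [hklTB]
      refine Finset.sum_congr rfl fun i _ => ?_
      rw [← hlec]
    rw [h1, block_sum p x hx' hB2, perm_sum p x hx' hB2 hB0 hco, nsmul_eq_mul]
    rfl
  have hker : ∀ x : AlgebraicClosure (ZMod p),
      (x ∈ Ffield p n ∧ Smap p l k x = 0) ↔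
        (x ^ p ^ d = x ∧ ((k / L : ℕ) : AlgebraicClosure (ZMod p)) * Smap p e d x = 0) := by
    intro x
    constructor
    · rintro ⟨hxn, hs⟩
      have hxn' : x ^ p ^ n = x := hxn
      have htel := Smap_tel p l k hlk hkl x
      rw [hs] at htel
      have hxk : x ^ p ^ k = x := by
        have hpl : p ^ l ≠ 0 := pow_ne_zero l (Fact.out : p.Prime).ne_zero
        rw [zero_pow hpl, add_zero] at htel
        exact (sub_eq_zero.1 htel.symm).symm
      have hxd : x ^ p ^ d = x := hd ▸ pow_pow_gcd p x n k hxn' hxk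
      exact ⟨hxd, by rw [← hSrw x hxd, hs]⟩
    · rintro ⟨hxd, hs⟩
      exact ⟨pow_pow_dvd p x hxd hdn, by rw [hSrw x hxd]; exact hs⟩
  constructor
  · intro hpT
    have hT0 : ((k / L : ℕ) : AlgebraicClosure (ZMod p)) = 0 :=
      (CharP.cast_eq_zero_iff _ p _).2 hpT
    have hset : {x | x ∈ Ffield p n ∧ Smap p l k x = 0} = Ffield p d := by
      ext x
      rw [Set.mem_setOf_eq, hker x, hT0, zero_mul]
      simp [Ffield]
    exact ⟨hset, by rw [hset]; exact Ffield_ncard p d hd0⟩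
  · intro hpT
    have hT0 : ((k / L : ℕ) : AlgebraicClosure (ZMod p)) ≠ 0 :=
      fun h => hpT ((CharP.cast_eq_zero_iff _ p _).1 h)
    have hS0 : {x | x ∈ Ffield p n ∧ Smap p l k x = 0}
        = {x : AlgebraicClosure (ZMod p) | x ^ p ^ d = x ∧ Smap p e d x = 0} := by
      ext x
      rw [Set.mem_setOf_eq, hker x, Set.mem_setOf_eq]
      constructor
      · rintro ⟨h1, h2⟩
        rcases mul_eq_zero.1 h2 with h | h
        · exact absurd h hT0
        · exact ⟨h1, h⟩
      · rintro ⟨h1, h2⟩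
        exact ⟨h1, by rw [h2, mul_zero]⟩
    set Kset : Set (AlgebraicClosure (ZMod p)) :=
      {x : AlgebraicClosure (ZMod p) | x ^ p ^ d = x ∧ Smap p e d x = 0} with hKsetdef
    have hQne := Qpoly_ne_zero (AlgebraicClosure (ZMod p)) p e (d / e) hB0 he0
    have hKsub : Kset ⊆ {x : AlgebraicClosure (ZMod p)
        | (Qpoly (AlgebraicClosure (ZMod p)) p e (d / e)).eval x = 0} := by
      rintro x ⟨h1, h2⟩
      show (Qpoly _ p e (d / e)).eval x = 0
      rw [Qpoly_eval]
      exact h2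
    have hKfin : Kset.Finite := Set.Finite.subset (eval_zero_finite _ hQne) hKsub
    have hKcard : Kset.ncard ≤ p ^ (d - e) := by
      refine le_trans (Set.ncard_le_ncard hKsub (eval_zero_finite _ hQne)) ?_
      refine le_trans (eval_zero_ncard _ hQne) ?_
      rw [← hedB1]
      exact Qpoly_natDegree_le _ p e (d / e) hB0
    have himgsub : (fun x => x + x ^ p ^ e) '' Ffield p d ⊆ Kset := by
      rintro _ ⟨y, hy, rfl⟩
      have hyd : y ^ p ^ d = y := hy
      have hye : (y ^ p ^ e) ^ p ^ d = y ^ p ^ e := by rw [pow_right_comm, hyd]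
      refine ⟨?_, ?_⟩
      · show (y + y ^ p ^ e) ^ p ^ d = _
        rw [add_pow_char_pow, hyd, hye]
      · show Smap p e d (y + y ^ p ^ e) = 0
        rw [Smap_add, Smap_frob]
        have htel := Smap_tel p e d hed hde y
        rw [hyd, sub_self] at htel
        rw [add_comm]
        exact htel
    set s : Finset (AlgebraicClosure (ZMod p)) :=
      (Fpoly (AlgebraicClosure (ZMod p)) p d).roots.toFinset with hsdef
    have hscoe : ↑s = Ffield p d := by
      rw [hsdef, ← eval_zero_subset _ (Fpoly_ne_zero _ p hd0)]
      ext x; simp [Ffield, Fpoly_eval, sub_eq_zero]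
    have hscard : s.card = p ^ d := by
      rw [← Set.ncard_coe_finset, hscoe]; exact Ffield_ncard p d hd0
    have hfiber : ∀ b ∈ s.image (fun x => x + x ^ p ^ e),
        (s.filter (fun a => a + a ^ p ^ e = b)).card ≤ p ^ e := by
      intro b _
      set R : Polynomial (AlgebraicClosure (ZMod p)) :=
        Polynomial.X ^ p ^ e + Polynomial.X - Polynomial.C b with hRdef
      have hRne : R ≠ 0 := by
        intro h0
        have hc : R.coeff (p ^ e) = 1 := by
          have h1 := p_pow_ne_one p he0
          have h2 : p ^ e ≠ 0 := pow_ne_zero e (Fact.out : p.Prime).ne_zero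
          simp [hRdef, Polynomial.coeff_X_pow, Polynomial.coeff_X, Polynomial.coeff_C,
            h1, Ne.symm h1, h2, (Fact.out : p.Prime).ne_zero]
        rw [h0] at hc; simp at hc
      have hRdeg : R.natDegree ≤ p ^ e := by
        refine le_trans (Polynomial.natDegree_sub_le _ _) ?_
        have h1 : (Polynomial.X ^ p ^ e + Polynomial.X
            : Polynomial (AlgebraicClosure (ZMod p))).natDegree ≤ p ^ e := by
          refine le_trans (Polynomial.natDegree_add_le _ _) ?_
          simp [Polynomial.natDegree_X_pow]
          exact Nat.one_le_pow _ _ (Fact.out : p.Prime).pos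
        simp [h1]
      have hsub2 : s.filter (fun a => a + a ^ p ^ e = b) ⊆ R.roots.toFinset := by
        intro a ha
        rw [Finset.mem_filter] at ha
        rw [Multiset.mem_toFinset, Polynomial.mem_roots']
        refine ⟨hRne, ?_⟩
        show R.eval a = 0
        rw [hRdef]
        simp only [Polynomial.eval_sub, Polynomial.eval_add, Polynomial.eval_pow,
          Polynomial.eval_X, Polynomial.eval_C]
        rw [← ha.2]; ring
      refine le_trans (Finset.card_le_card hsub2) ?_
      refine le_trans (Multiset.toFinset_card_le _) ?_
      exact le_trans (Polynomial.card_roots' R) hRdeg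
    have hcardineq := Finset.card_le_mul_card_image s (p ^ e) hfiber
    rw [hscard] at hcardineq
    have himgcard : ((fun x => x + x ^ p ^ e) '' Ffield p d).ncard
        = (s.image (fun x => x + x ^ p ^ e)).card := by
      rw [← hscoe, ← Finset.coe_image, Set.ncard_coe_finset]
    have hlow : p ^ (d - e) ≤ ((fun x => x + x ^ p ^ e) '' Ffield p d).ncard := by
      rw [himgcard]
      have hpe0 : 0 < p ^ e := pow_pos (Fact.out : p.Prime).pos e
      refine Nat.le_of_mul_le_mul_left ?_ hpe0
      calc p ^ e * p ^ (d - e) = p ^ d := by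
            rw [← pow_add]; congr 1
            have := Nat.le_of_dvd hd0 hed
            omega
        _ ≤ p ^ e * (s.image (fun x => x + x ^ p ^ e)).card := hcardineq
    have himgKset : (fun x => x + x ^ p ^ e) '' Ffield p d = Kset :=
      Set.eq_of_subset_of_ncard_le himgsub (le_trans hKcard hlow) hKfin
    refine ⟨by rw [hS0, ← himgKset], ?_⟩
    rw [hS0, ← himgKset]
    exact le_antisymm (himgKset ▸ hKcard) hlow
end

section
/- Let p be a prime, let n, k, l be positive integers with l | k and k/l even, and set d = gcd(n,k), e = gcd(n,l). Suppose d/e is odd. Then {x ∈ 𝔽_{p^n} : S_l^k(x) = 0} = 𝔽_{p^d}, and consequently this set has cardinality p^d. -/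
open Finset

section aux
open Polynomial
variable {F : Type*} [Field F]

lemma fix_mul {x : F} {q : ℕ} (h : x ^ q = x) : ∀ t, x ^ q ^ t = x := by
  intro t
  induction t with
  | zero => simp
  | succ t ih => rw [pow_succ, pow_mul, ih, h]

lemma fix_dvd {x : F} {p a b : ℕ} (hab : a ∣ b) (h : x ^ p ^ a = x) : x ^ p ^ b = x := by
  obtain ⟨t, rfl⟩ := hab
  have := fix_mul (q := p ^ a) h t
  rwa [← pow_mul] at this

lemma fix_gcd {x : F} {p : ℕ} : ∀ a b, x ^ p ^ a = x → x ^ p ^ b = x →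
    x ^ p ^ Nat.gcd a b = x := by
  intro a b
  induction a, b using Nat.gcd.induction with
  | H0 n => exact fun _ h => by simpa using h
  | H1 a b ha ih =>
    intro hxa hxb
    rw [Nat.gcd_rec]
    refine ih ?_ hxa
    have hb : b = a * (b / a) + b % a := (Nat.div_add_mod b a).symm ▸ by omega
    calc x ^ p ^ (b % a) = (x ^ p ^ (a * (b / a))) ^ p ^ (b % a) := by
          rw [fix_dvd (Dvd.intro _ rfl) hxa]
      _ = x ^ p ^ b := by rw [← pow_mul, ← pow_add, ← hb]
      _ = x := hxb

lemma sum_antiperiodic_eq_zero (g : ℕ → F) (r : ℕ) (hg : ∀ i, g (i + r) = - g i) :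
    ∀ s, ∑ i ∈ Finset.range (r * (2 * s)), g i = 0 := by
  intro s
  induction s with
  | zero => simp
  | succ s ih =>
    have h1 : r * (2 * (s + 1)) = r * (2 * s) + (r + r) := by ring
    rw [h1, Finset.sum_range_add, ih, zero_add, Finset.sum_range_add]
    have h2 : ∀ j ∈ Finset.range r, g (r * (2 * s) + (r + j)) = - g (r * (2 * s) + j) := by
      intro j _
      rw [show r * (2 * s) + (r + j) = (r * (2 * s) + j) + r by ring, hg]
    rw [Finset.sum_congr rfl h2, Finset.sum_neg_distrib]
    simp

end aux

lemma smap_add_pow (p : ℕ) [Fact p.Prime] (l k : ℕ) (hlk : l ∣ k) (hkl : Even (k / l))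
    (x : AlgebraicClosure (ZMod p)) :
    Smap p l k x + (Smap p l k x) ^ p ^ l = x - x ^ p ^ k := by
  have hfrob : (Smap p l k x) ^ p ^ l
      = ∑ i ∈ Finset.range (k / l),
        (-1 : AlgebraicClosure (ZMod p)) ^ i * x ^ p ^ (l * (i + 1)) := by
    rw [← iterateFrobenius_def p l (Smap p l k x), Smap, map_sum]
    refine Finset.sum_congr rfl fun i _ => ?_
    rw [map_mul, map_pow, map_neg, map_one, iterateFrobenius_def, ← pow_mul, ← pow_add,
      show l * i + l = l * (i + 1) by ring]
  have key : Smap p l k x + (Smap p l k x) ^ p ^ l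
      = ∑ i ∈ Finset.range (k / l),
        (((-1 : AlgebraicClosure (ZMod p)) ^ i * x ^ p ^ (l * i))
          - ((-1 : AlgebraicClosure (ZMod p)) ^ (i + 1) * x ^ p ^ (l * (i + 1)))) := by
    rw [hfrob, Smap, ← Finset.sum_add_distrib]
    exact Finset.sum_congr rfl fun i _ => by rw [pow_succ]; ring
  rw [key,
    Finset.sum_range_sub' (f := fun i => (-1 : AlgebraicClosure (ZMod p)) ^ i * x ^ p ^ (l * i)),
    Nat.mul_div_cancel' hlk]
  simp [hkl.neg_one_pow]

theorem stmt10 (p : ℕ) [Fact p.Prime] (n k l : ℕ) (hn : 0 < n) (hk : 0 < k) (hl : 0 < l)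
    (hlk : l ∣ k) (hkl : Even (k / l)) (d e : ℕ)
    (hd : d = Nat.gcd n k) (he : e = Nat.gcd n l)
    (hde : Odd (d / e)) :
    {x | x ∈ Ffield p n ∧ Smap p l k x = 0} = Ffield p d ∧
    {x | x ∈ Ffield p n ∧ Smap p l k x = 0}.ncard = p ^ d := by
  classical
  have hp1 : 1 < p := (Fact.out : p.Prime).one_lt
  have hdn : d ∣ n := hd ▸ Nat.gcd_dvd_left n k
  have hdk : d ∣ k := hd ▸ Nat.gcd_dvd_right n k
  have hen : e ∣ n := he ▸ Nat.gcd_dvd_left n l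
  have hel : e ∣ l := he ▸ Nat.gcd_dvd_right n l
  have hed : e ∣ d := hd ▸ Nat.dvd_gcd hen (hel.trans hlk)
  have he0 : 0 < e := he ▸ Nat.gcd_pos_of_pos_left l hn
  have hd0 : 0 < d := hd ▸ Nat.gcd_pos_of_pos_left k hn
  set r := d / e with hr
  have hrodd : Odd r := hde
  have hrd : e * r = d := Nat.mul_div_cancel' hed
  have hgcdld : Nat.gcd l d = e := by
    rw [hd, ← Nat.gcd_assoc, Nat.gcd_comm l n, ← he, Nat.gcd_eq_left (hel.trans hlk)]
  have hlr : l * r = Nat.lcm l d := by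
    have h1 : e * Nat.lcm l d = e * (l * r) := by
      rw [← hgcdld, Nat.gcd_mul_lcm]
      rw [hgcdld, ← hrd]; ring
    exact (Nat.eq_of_mul_eq_mul_left he0 h1).symm
  have hlrk : l * r ∣ k := hlr ▸ Nat.lcm_dvd hlk hdk
  have hrm : r ∣ k / l := (Nat.dvd_div_iff_mul_dvd hlk).mpr hlrk
  set s := (k / l) / r with hs
  have hsm : r * s = k / l := Nat.mul_div_cancel' hrm
  have hs_even : Even s := by
    rcases Nat.even_mul.mp (hsm ▸ hkl) with h | h
    · exact absurd h (Nat.not_even_iff_odd.mpr hrodd)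
    · exact h
  obtain ⟨u, hu⟩ := hs_even
  have hdlr : d ∣ l * r := hlr ▸ Nat.dvd_lcm_right l d
  have hset : {x | x ∈ Ffield p n ∧ Smap p l k x = 0} = Ffield p d := by
    ext x
    simp only [Set.mem_setOf_eq, Ffield]
    constructor
    · rintro ⟨hxn, hS⟩
      have hid := smap_add_pow p l k hlk hkl x
      have hpl : (p : ℕ) ^ l ≠ 0 := (pow_pos (by omega) l).ne'
      rw [hS, zero_pow hpl, add_zero] at hid
      have hxk : x ^ p ^ k = x := (sub_eq_zero.mp hid.symm).symm
      rw [hd]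
      exact fix_gcd n k hxn hxk
    · intro hxd
      refine ⟨fix_dvd hdn hxd, ?_⟩
      have hfix : x ^ p ^ (l * r) = x := fix_dvd hdlr hxd
      have hg : ∀ i, (-1 : AlgebraicClosure (ZMod p)) ^ (i + r) * x ^ p ^ (l * (i + r))
          = -((-1 : AlgebraicClosure (ZMod p)) ^ i * x ^ p ^ (l * i)) := by
        intro i
        have h1 : x ^ p ^ (l * (i + r)) = x ^ p ^ (l * i) := by
          rw [show l * (i + r) = l * r + l * i by ring, pow_add, pow_mul, hfix]
        rw [h1, pow_add, hrodd.neg_one_pow]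
        ring
      have hm2 : k / l = r * (2 * u) := by rw [← hsm, hu]; ring
      rw [Smap, hm2]
      exact sum_antiperiodic_eq_zero _ r hg u
  refine ⟨hset, ?_⟩
  rw [hset]
  have hd' : d ≠ 0 := hd0.ne'
  have hsep : Polynomial.Separable
      (Polynomial.X ^ p ^ d - Polynomial.X : Polynomial (AlgebraicClosure (ZMod p))) :=
    galois_poly_separable p (p ^ d) (dvd_pow_self p hd')
  have hne : (Polynomial.X ^ p ^ d - Polynomial.X : Polynomial (AlgebraicClosure (ZMod p))) ≠ 0 :=
    FiniteField.X_pow_card_pow_sub_X_ne_zero _ hd' hp1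
  have hroots : Ffield p d
      = ↑(Polynomial.X ^ p ^ d - Polynomial.X : Polynomial (AlgebraicClosure (ZMod p))).roots.toFinset := by
    ext x
    simp [Ffield, Polynomial.mem_roots, hne, Polynomial.IsRoot, sub_eq_zero]
  rw [hroots, Set.ncard_coe_finset,
    Multiset.toFinset_card_of_nodup (Polynomial.nodup_roots hsep),
    Polynomial.splits_iff_card_roots.mp (IsAlgClosed.splits _),
    FiniteField.X_pow_card_pow_sub_X_natDegree_eq _ hd' hp1]
end

section
/- Let p be a prime, let n, k, l be positive integers with l | k, set d = gcd(n,k), L = lcm(d,l), and suppose p divides k/L. Let a ∈ 𝔽_{p^n}. Then the equation T_l^k(X) = a has a solution in 𝔽_{p^n} if and only if T_d^n(a) = 0. Moreover, in that case, for any δ ∈ 𝔽_{p^n} with T_d^n(δ) = 1, the element x₀ = S_l^{2l}( Σ_{i=0}^{n/d−2} Σ_{j=i+1}^{n/d−1} δ^{p^{kj}} a^{p^{ki}} ) lies in 𝔽_{p^n} and satisfies T_l^k(x₀) = a. -/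
open Finset

section Helpers
variable (p : ℕ) [Fact p.Prime]
local notation "K" => AlgebraicClosure (ZMod p)

lemma fpw_add' (x : K) (a b : ℕ) : x ^ p ^ (a + b) = (x ^ p ^ a) ^ p ^ b := by
  rw [← pow_mul, ← pow_add]

lemma fpw_sum {ι : Type*} (s : Finset ι) (f : ι → K) (m : ℕ) :
    (∑ i ∈ s, f i) ^ p ^ m = ∑ i ∈ s, (f i) ^ p ^ m := by
  simpa only [iterateFrobenius_def] using map_sum (iterateFrobenius K p m) f s

lemma fpw_sub (x y : K) (m : ℕ) : (x - y) ^ p ^ m = x ^ p ^ m - y ^ p ^ m := by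
  simpa only [iterateFrobenius_def] using map_sub (iterateFrobenius K p m) x y

lemma fpw_fix' {x : K} {d : ℕ} (hx : x ^ p ^ d = x) {m : ℕ} (hdm : d ∣ m) :
    x ^ p ^ m = x := by
  obtain ⟨t, rfl⟩ := hdm
  induction t with
  | zero => simp
  | succ t ih => rw [Nat.mul_succ, fpw_add', ih, hx]

lemma fpw_mod' {x : K} {n : ℕ} (hx : x ^ p ^ n = x) (m : ℕ) :
    x ^ p ^ m = x ^ p ^ (m % n) := by
  conv_lhs => rw [← Nat.div_add_mod m n, fpw_add', fpw_fix' p hx (dvd_mul_right n (m / n))]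

variable {n : ℕ}

lemma mem_fpw {x : K} (hx : x ^ p ^ n = x) (m : ℕ) :
    (x ^ p ^ m) ^ p ^ n = x ^ p ^ m := by
  rw [← fpw_add', Nat.add_comm, fpw_add', hx]

lemma mem_mul {x y : K} (hx : x ^ p ^ n = x) (hy : y ^ p ^ n = y) :
    (x * y) ^ p ^ n = x * y := by rw [mul_pow, hx, hy]

lemma mem_sub {x y : K} (hx : x ^ p ^ n = x) (hy : y ^ p ^ n = y) :
    (x - y) ^ p ^ n = x - y := by rw [fpw_sub, hx, hy]

lemma mem_sum {ι : Type*} {s : Finset ι} {f : ι → K}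
    (h : ∀ i ∈ s, (f i) ^ p ^ n = f i) : (∑ i ∈ s, f i) ^ p ^ n = ∑ i ∈ s, f i := by
  rw [fpw_sum]; exact Finset.sum_congr rfl h

lemma tr_reindex {x : K} {k d e : ℕ} (hn : 0 < n) (hk : 0 < k) (hx : x ^ p ^ n = x)
    (hd : d = Nat.gcd n k) (he : e = n / d) :
    ∑ i ∈ range e, x ^ p ^ (k * i) = ∑ i ∈ range e, x ^ p ^ (d * i) := by
  have hdpos : 0 < d := hd ▸ Nat.gcd_pos_of_pos_left k hn
  have hnd : d ∣ n := hd ▸ Nat.gcd_dvd_left n k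
  have hkd : d ∣ k := hd ▸ Nat.gcd_dvd_right n k
  have hde : d * e = n := by rw [he, Nat.mul_div_cancel' hnd]
  have hepos : 0 < e := by
    rw [he]; exact Nat.div_pos (Nat.le_of_dvd hn hnd) hdpos
  set k' := k / d with hk'
  have hkk' : d * k' = k := by rw [hk', Nat.mul_div_cancel' hkd]
  have hcop : Nat.Coprime k' e := by
    rw [hk', he, hd]
    exact (Nat.coprime_div_gcd_div_gcd (hd ▸ hdpos)).symm
  have key : ∀ i, x ^ p ^ (k * i) = x ^ p ^ (d * (k' * i % e)) := by
    intro i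
    rw [fpw_mod' p hx (k * i), fpw_mod' p hx (d * (k' * i % e))]
    congr 2
    have h1 : (k' * i) % e ≡ k' * i [MOD e] := Nat.mod_modEq _ _
    have h2 : d * (k' * i % e) ≡ d * (k' * i) [MOD d * e] := h1.mul_left' d
    have h3 : d * (k' * i) = k * i := by rw [← hkk']; ring
    rw [hde] at h2
    rw [← h3]
    exact h2.symm
  rw [Finset.sum_congr rfl fun i _ => key i]
  rcases Nat.lt_or_ge 1 e with he1 | he1
  · obtain ⟨m, -, hm⟩ := Nat.exists_mul_mod_eq_one_of_coprime hcop he1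
    refine Finset.sum_nbij' (fun i => k' * i % e) (fun j => m * j % e) ?_ ?_ ?_ ?_ ?_
    · intro a _; exact Finset.mem_range.mpr (Nat.mod_lt _ hepos)
    · intro a _; exact Finset.mem_range.mpr (Nat.mod_lt _ hepos)
    · intro a ha
      show m * (k' * a % e) % e = a
      have h1 : m * (k' * a % e) % e = m * (k' * a) % e := Nat.ModEq.mul_left m (Nat.mod_modEq _ _)
      rw [h1]
      have h4 : m * (k' * a) = (k' * m) * a := by ring
      rw [h4, Nat.mul_mod, hm, Nat.one_mul, Nat.mod_mod_of_dvd,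
        Nat.mod_eq_of_lt (Finset.mem_range.mp ha)]
      exact dvd_rfl
    · intro b hb
      show k' * (m * b % e) % e = b
      have h1 : k' * (m * b % e) % e = k' * (m * b) % e := Nat.ModEq.mul_left k' (Nat.mod_modEq _ _)
      rw [h1]
      have h4 : k' * (m * b) = (k' * m) * b := by ring
      rw [h4, Nat.mul_mod, hm, Nat.one_mul, Nat.mod_mod_of_dvd,
        Nat.mod_eq_of_lt (Finset.mem_range.mp hb)]
      exact dvd_rfl
    · intro a _; rfl
  · interval_cases e
    simp

lemma tr_fix {x : K} {d e : ℕ} (hx : x ^ p ^ n = x) (hde : d * e = n) :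
    (∑ i ∈ range e, x ^ p ^ (d * i)) ^ p ^ d = ∑ i ∈ range e, x ^ p ^ (d * i) := by
  rw [fpw_sum]
  have h1 : ∀ i : ℕ, (x ^ p ^ (d * i)) ^ p ^ d = x ^ p ^ (d * (i + 1)) := by
    intro i; rw [← fpw_add', Nat.mul_succ]
  rw [Finset.sum_congr rfl fun i _ => h1 i]
  have h2 := Finset.sum_range_succ' (fun i => x ^ p ^ (d * i)) e
  have h3 := Finset.sum_range_succ (fun i => x ^ p ^ (d * i)) e
  have hee : x ^ p ^ (d * e) = x ^ p ^ (d * 0) := by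
    rw [hde, hx]; simp
  have h4 : (∑ i ∈ range e, x ^ p ^ (d * (i + 1))) + x ^ p ^ (d * 0)
      = (∑ i ∈ range e, x ^ p ^ (d * i)) + x ^ p ^ (d * e) := h2.symm.trans h3
  rw [hee] at h4
  exact add_right_cancel h4

lemma tlk_vanish {y : K} {d l L M t : ℕ} (hy : y ^ p ^ d = y) (hdL : d ∣ L)
    (hlt : l * t = L) (hp : p ∣ M) :
    ∑ j ∈ range (M * t), y ^ p ^ (l * j) = 0 := by
  have key : ∀ M' : ℕ, ∑ j ∈ range (M' * t), y ^ p ^ (l * j)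
      = M' • ∑ s ∈ range t, y ^ p ^ (l * s) := by
    intro M'; induction M' with
    | zero => simp
    | succ M' ih =>
      have h1 : ∑ j ∈ Ico (M' * t) (M' * t + t), y ^ p ^ (l * j)
          = ∑ s ∈ range t, y ^ p ^ (l * s) := by
        rw [Finset.sum_Ico_eq_sum_range]
        simp only [Nat.add_sub_cancel_left]
        apply Finset.sum_congr rfl
        intro s _
        have hexp : l * (M' * t + s) = L * M' + l * s := by rw [← hlt]; ring
        rw [hexp, fpw_add', fpw_fix' p hy (hdL.mul_right M')]
      have h0 : (M' + 1) * t = M' * t + t := by rw [Nat.succ_mul]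
      rw [h0, Finset.range_eq_Ico,
        ← Finset.sum_Ico_consecutive _ (Nat.zero_le (M' * t)) (Nat.le_add_right (M' * t) t),
        ← Finset.range_eq_Ico, ih, h1, succ_nsmul]
  rw [key M, nsmul_eq_mul, (CharP.cast_eq_zero_iff K p M).mpr hp, zero_mul]

end Helpers

section Main
variable (p : ℕ) [Fact p.Prime]
local notation "K" => AlgebraicClosure (ZMod p)

lemma main_solution {n k l d : ℕ} (hn : 0 < n) (hk : 0 < k) (hl : 0 < l) (hlk : l ∣ k)
    (hd : d = Nat.gcd n k) {a δ : K}
    (ha : a ^ p ^ n = a) (hδ : δ ^ p ^ n = δ)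
    (hTa : Tmap p d n a = 0) (hTδ : Tmap p d n δ = 1) :
    Smap p l (2 * l) (∑ i ∈ Finset.range (n / d - 1), ∑ j ∈ Finset.Ico (i + 1) (n / d),
        δ ^ p ^ (k * j) * a ^ p ^ (k * i)) ∈ Ffield p n ∧
    Tmap p l k (Smap p l (2 * l) (∑ i ∈ Finset.range (n / d - 1),
        ∑ j ∈ Finset.Ico (i + 1) (n / d), δ ^ p ^ (k * j) * a ^ p ^ (k * i))) = a := by
  have hdpos : 0 < d := hd ▸ Nat.gcd_pos_of_pos_left k hn
  have hnd : d ∣ n := hd ▸ Nat.gcd_dvd_left n k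
  have hkd : d ∣ k := hd ▸ Nat.gcd_dvd_right n k
  simp only [Tmap] at hTa hTδ
  set e := n / d with he
  have hde : d * e = n := Nat.mul_div_cancel' hnd
  have hepos : 0 < e := Nat.div_pos (Nat.le_of_dvd hn hnd) hdpos
  have he1 : e - 1 + 1 = e := Nat.succ_pred_eq_of_pos hepos
  obtain ⟨k', hk'⟩ := hkd
  have hne : n ∣ k * e := ⟨k', by rw [hk', ← hde]; ring⟩
  have hδe : δ ^ p ^ (k * e) = δ := fpw_fix' p hδ hne
  have hTa' : ∑ i ∈ range e, a ^ p ^ (k * i) = 0 := by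
    rw [tr_reindex p hn hk ha hd he]; exact hTa
  have hTδ' : ∑ i ∈ range e, δ ^ p ^ (k * i) = 1 := by
    rw [tr_reindex p hn hk hδ hd he]; exact hTδ
  set c := ∑ i ∈ Finset.range (e - 1), ∑ j ∈ Finset.Ico (i + 1) e,
      δ ^ p ^ (k * j) * a ^ p ^ (k * i) with hc
  set G : ℕ → K := fun i => (∑ j ∈ Ico (i + 1) e, δ ^ p ^ (k * j)) * a ^ p ^ (k * i) with hG
  have hcG : c = ∑ i ∈ range (e - 1), G i := by
    rw [hc]; exact Finset.sum_congr rfl fun i _ => (Finset.sum_mul _ _ _).symm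
  have hterm : ∀ i j : ℕ, (δ ^ p ^ (k * j) * a ^ p ^ (k * i)) ^ p ^ k
      = δ ^ p ^ (k * (j + 1)) * a ^ p ^ (k * (i + 1)) := by
    intro i j
    rw [mul_pow, ← fpw_add', ← fpw_add', ← Nat.mul_succ, ← Nat.mul_succ]
  have hGsum : ∀ i : ℕ, ∑ j ∈ Ico (i + 1) e, δ ^ p ^ (k * (j + 1))
      = ∑ j ∈ Ico (i + 2) (e + 1), δ ^ p ^ (k * j) := by
    intro i
    rw [Finset.sum_Ico_eq_sum_range, Finset.sum_Ico_eq_sum_range]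
    have hee : e + 1 - (i + 2) = e - (i + 1) := by omega
    rw [hee]
    refine Finset.sum_congr rfl fun t _ => ?_
    rw [show i + 1 + t + 1 = i + 2 + t by omega]
  have expand : c ^ p ^ k = ∑ i ∈ range (e - 1),
      ((∑ j ∈ Ico (i + 2) e, δ ^ p ^ (k * j)) + δ) * a ^ p ^ (k * (i + 1)) := by
    rw [hc, fpw_sum]
    refine Finset.sum_congr rfl fun i hi => ?_
    have hi' : i < e - 1 := Finset.mem_range.mp hi
    rw [fpw_sum, Finset.sum_congr rfl fun j _ => hterm i j, ← Finset.sum_mul, hGsum i,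
      Finset.sum_Ico_succ_top (by omega : i + 2 ≤ e) _, hδe]
  have hsplit : ∑ i ∈ range (e - 1),
      ((∑ j ∈ Ico (i + 2) e, δ ^ p ^ (k * j)) + δ) * a ^ p ^ (k * (i + 1))
      = (∑ i ∈ range (e - 1), G (i + 1))
        + ∑ i ∈ range (e - 1), δ * a ^ p ^ (k * (i + 1)) := by
    rw [← Finset.sum_add_distrib]
    refine Finset.sum_congr rfl fun i _ => ?_
    have hGi : G (i + 1) = (∑ j ∈ Ico (i + 2) e, δ ^ p ^ (k * j)) * a ^ p ^ (k * (i + 1)) := by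
      simp only [hG]
    rw [hGi, add_mul]
  have hGe : G (e - 1) = 0 := by
    rw [hG]
    simp [he1]
  have hG1 : ∑ i ∈ range (e - 1), G (i + 1) = c - G 0 := by
    have h2 := Finset.sum_range_succ' G (e - 1)
    have h3 := Finset.sum_range_succ G (e - 1)
    have h4 : (∑ i ∈ range (e - 1), G (i + 1)) + G 0
        = (∑ i ∈ range (e - 1), G i) + G (e - 1) := h2.symm.trans h3
    rw [hGe, add_zero, ← hcG] at h4
    exact eq_sub_of_add_eq h4
  have hG0 : G 0 = (1 - δ) * a := by
    simp only [hG]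
    have h5 : ∑ j ∈ Ico (0 + 1) e, δ ^ p ^ (k * j) = 1 - δ := by
      have h6 := Finset.sum_range_succ' (fun j => δ ^ p ^ (k * j)) (e - 1)
      rw [he1] at h6
      rw [Finset.sum_Ico_eq_sum_range]
      calc ∑ t ∈ range (e - (0 + 1)), δ ^ p ^ (k * (0 + 1 + t))
          = ∑ t ∈ range (e - 1), δ ^ p ^ (k * (t + 1)) := by
            refine Finset.sum_congr (by rw [Nat.zero_add]) fun t _ => ?_
            rw [show 0 + 1 + t = t + 1 by omega]
        _ = 1 - δ := by
            rw [hTδ'] at h6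
            have := eq_sub_of_add_eq h6.symm
            rw [this]
            simp
    rw [h5]
    simp
  have hsum2 : ∑ i ∈ range (e - 1), δ * a ^ p ^ (k * (i + 1)) = δ * (0 - a) := by
    rw [← Finset.mul_sum]
    congr 1
    have h7 := Finset.sum_range_succ' (fun i => a ^ p ^ (k * i)) (e - 1)
    rw [he1, hTa'] at h7
    have h8 := eq_sub_of_add_eq h7.symm
    rw [h8]
    simp
  have hck : c ^ p ^ k = c - a := by
    rw [expand, hsplit, hG1, hG0, hsum2]
    ring
  have hcF : c ^ p ^ n = c := by
    refine mem_sum p fun i _ => mem_sum p fun j _ => mem_mul p (mem_fpw p hδ _) (mem_fpw p ha _)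
  have hS : Smap p l (2 * l) c = c - c ^ p ^ l := by
    simp only [Smap]
    rw [Nat.mul_div_cancel _ hl, Finset.sum_range_succ, Finset.sum_range_succ,
      Finset.sum_range_zero]
    simp only [pow_zero, pow_one, one_mul, Nat.mul_zero, Nat.mul_one, zero_add, neg_one_mul]
    rw [sub_eq_add_neg]
  rw [hS]
  constructor
  · show (c - c ^ p ^ l) ^ p ^ n = c - c ^ p ^ l
    exact mem_sub p hcF (mem_fpw p hcF l)
  · simp only [Tmap]
    have hstep : ∀ i : ℕ, (c - c ^ p ^ l) ^ p ^ (l * i)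
        = c ^ p ^ (l * i) - c ^ p ^ (l * (i + 1)) := by
      intro i
      rw [fpw_sub]
      congr 1
      rw [← fpw_add']
      congr 2
      rw [Nat.mul_succ]
      exact Nat.add_comm l (l * i)
    rw [Finset.sum_congr rfl fun i _ => hstep i,
      Finset.sum_range_sub' (fun i => c ^ p ^ (l * i)) (k / l)]
    rw [Nat.mul_div_cancel' hlk, hck]
    simp

lemma trace_of_tlk {n k l d L : ℕ} (hn : 0 < n) (hk : 0 < k) (hl : 0 < l) (hlk : l ∣ k)
    (hd : d = Nat.gcd n k) (hL : L = Nat.lcm d l) (hpk : p ∣ k / L)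
    {x : K} (hx : x ^ p ^ n = x) :
    Tmap p d n (Tmap p l k x) = 0 := by
  simp only [Tmap]
  have hnd : d ∣ n := hd ▸ Nat.gcd_dvd_left n k
  have hdk : d ∣ k := hd ▸ Nat.gcd_dvd_right n k
  set e := n / d with he
  have hde : d * e = n := Nat.mul_div_cancel' hnd
  have hswap : ∑ i ∈ range e, (∑ j ∈ range (k / l), x ^ p ^ (l * j)) ^ p ^ (d * i)
      = ∑ j ∈ range (k / l), (∑ i ∈ range e, x ^ p ^ (d * i)) ^ p ^ (l * j) := by
    calc ∑ i ∈ range e, (∑ j ∈ range (k / l), x ^ p ^ (l * j)) ^ p ^ (d * i)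
        = ∑ i ∈ range e, ∑ j ∈ range (k / l), x ^ p ^ (l * j + d * i) := by
          refine Finset.sum_congr rfl fun i _ => ?_
          rw [fpw_sum]
          exact Finset.sum_congr rfl fun j _ => (fpw_add' p x (l * j) (d * i)).symm
      _ = ∑ j ∈ range (k / l), ∑ i ∈ range e, x ^ p ^ (l * j + d * i) := Finset.sum_comm
      _ = ∑ j ∈ range (k / l), (∑ i ∈ range e, x ^ p ^ (d * i)) ^ p ^ (l * j) := by
          refine Finset.sum_congr rfl fun j _ => ?_
          rw [fpw_sum]
          refine Finset.sum_congr rfl fun i _ => ?_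
          rw [← fpw_add', Nat.add_comm]
  have hyd : (∑ i ∈ range e, x ^ p ^ (d * i)) ^ p ^ d = ∑ i ∈ range e, x ^ p ^ (d * i) :=
    tr_fix p hx hde
  have hlL : l ∣ L := hL ▸ Nat.dvd_lcm_right d l
  have hdL : d ∣ L := hL ▸ Nat.dvd_lcm_left d l
  have hLk : L ∣ k := hL ▸ Nat.lcm_dvd hdk hlk
  have hlt : l * (L / l) = L := Nat.mul_div_cancel' hlL
  have hMt : k / l = k / L * (L / l) := by
    have h1 : k / L * (L / l) * l = k := by
      rw [mul_assoc, Nat.div_mul_cancel hlL, Nat.div_mul_cancel hLk]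
    conv_lhs => rw [← h1]
    rw [Nat.mul_div_cancel _ hl]
  rw [hswap, hMt]
  exact tlk_vanish p hyd hdL hlt hpk

lemma exists_delta {n d : ℕ} (hn : 0 < n) (hdpos : 0 < d) (hnd : d ∣ n) :
    ∃ δ : K, δ ∈ Ffield p n ∧ Tmap p d n δ = 1 := by
  classical
  set e := n / d with he
  have hde : d * e = n := Nat.mul_div_cancel' hnd
  have hepos : 0 < e := Nat.div_pos (Nat.le_of_dvd hn hnd) hdpos
  have hp2 : 1 < p := (Fact.out : p.Prime).one_lt
  have hzex : ∃ z : K, z ^ p ^ n = z ∧ ∑ i ∈ range e, z ^ p ^ (d * i) ≠ 0 := by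
    by_contra hcon
    push_neg at hcon
    set f : Polynomial K := Polynomial.X ^ p ^ n - Polynomial.X with hf
    set g : Polynomial K := ∑ i ∈ range e, Polynomial.X ^ p ^ (d * i) with hg
    have hfdeg : f.natDegree = p ^ n :=
      FiniteField.X_pow_card_pow_sub_X_natDegree_eq K hn.ne' hp2
    have hf0 : f ≠ 0 := FiniteField.X_pow_card_pow_sub_X_ne_zero K hn.ne' hp2
    have hsep : f.Separable := galois_poly_separable p (p ^ n) (dvd_pow_self p hn.ne')
    have hsplits : f.Splits := IsAlgClosed.splits f
    have hcard : Multiset.card f.roots = p ^ n := by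
      rw [(Polynomial.splits_iff_card_roots).mp hsplits, hfdeg]
    have hnodup : f.roots.Nodup := Polynomial.nodup_roots hsep
    have hg0 : g ≠ 0 := by
      intro h
      have hco : g.coeff 1 = 1 := by
        rw [hg, Polynomial.finset_sum_coeff]
        rw [Finset.sum_eq_single 0]
        · simp
        · intro i hi hne0
          rw [Polynomial.coeff_X_pow]
          have h1 : (1 : ℕ) ≠ p ^ (d * i) := by
            have : 1 < p ^ (d * i) :=
              Nat.one_lt_pow (by positivity) hp2
            omega
          simp [h1]
        · intro h0
          exact absurd (Finset.mem_range.mpr hepos) h0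
      rw [h] at hco
      simp at hco
    have hsub : f.roots.toFinset ⊆ g.roots.toFinset := by
      intro z hz
      rw [Multiset.mem_toFinset, Polynomial.mem_roots hf0] at hz
      rw [Multiset.mem_toFinset, Polynomial.mem_roots hg0]
      have hz' : z ^ p ^ n = z := by
        have := hz
        rw [Polynomial.IsRoot.def, hf] at this
        simp only [Polynomial.eval_sub, Polynomial.eval_pow, Polynomial.eval_X] at this
        linear_combination this
      rw [Polynomial.IsRoot.def, hg]
      simp only [Polynomial.eval_finset_sum, Polynomial.eval_pow, Polynomial.eval_X]
      exact hcon z hz'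
    have hineq : p ^ n ≤ g.natDegree := by
      calc p ^ n = f.roots.toFinset.card := by
            rw [Multiset.toFinset_card_eq_card_iff_nodup.mpr hnodup, hcard]
        _ ≤ g.roots.toFinset.card := Finset.card_le_card hsub
        _ ≤ Multiset.card g.roots := Multiset.toFinset_card_le _
        _ ≤ g.natDegree := Polynomial.card_roots' g
    have hdeglt : g.natDegree < p ^ n := by
      have hb : g.natDegree ≤ p ^ (d * (e - 1)) := by
        rw [hg]
        refine Polynomial.natDegree_sum_le_of_forall_le _ _ fun i hi => ?_
        rw [Polynomial.natDegree_X_pow]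
        refine Nat.pow_le_pow_right (le_of_lt hp2) (Nat.mul_le_mul_left d ?_)
        have := Finset.mem_range.mp hi
        omega
      have hlt2 : d * (e - 1) < n := by
        have he1 : e - 1 + 1 = e := Nat.succ_pred_eq_of_pos hepos
        have h9 : d * (e - 1) + d = n := by
          calc d * (e - 1) + d = d * (e - 1 + 1) := by ring
            _ = d * e := by rw [he1]
            _ = n := hde
        omega
      calc g.natDegree ≤ p ^ (d * (e - 1)) := hb
        _ < p ^ n := Nat.pow_lt_pow_right hp2 hlt2
    omega
  obtain ⟨z, hz, hTz⟩ := hzex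
  set w := ∑ i ∈ range e, z ^ p ^ (d * i) with hw
  have hwn : w ^ p ^ n = w := mem_sum p fun i _ => mem_fpw p hz _
  have hwd : w ^ p ^ d = w := tr_fix p hz hde
  refine ⟨z * w⁻¹, ?_, ?_⟩
  · show (z * w⁻¹) ^ p ^ n = z * w⁻¹
    rw [mul_pow, hz, inv_pow, hwn]
  · simp only [Tmap, ← he]
    have h1 : ∀ i ∈ range e, (z * w⁻¹) ^ p ^ (d * i) = z ^ p ^ (d * i) * w⁻¹ := by
      intro i _
      rw [mul_pow, inv_pow, fpw_fix' p hwd (dvd_mul_right d i)]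
    rw [Finset.sum_congr rfl h1, ← Finset.sum_mul, ← hw, mul_inv_cancel₀ hTz]

end Main

theorem stmt13 (p : ℕ) [Fact p.Prime] (n k l : ℕ) (hn : 0 < n) (hk : 0 < k) (hl : 0 < l)
    (hlk : l ∣ k) (d L : ℕ) (hd : d = Nat.gcd n k) (hL : L = Nat.lcm d l)
    (hpk : p ∣ k / L) (a : AlgebraicClosure (ZMod p)) (ha : a ∈ Ffield p n) :
    ((∃ x ∈ Ffield p n, Tmap p l k x = a) ↔ Tmap p d n a = 0) ∧
    (Tmap p d n a = 0 → ∀ δ ∈ Ffield p n, Tmap p d n δ = 1 →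
      ∀ x₀, x₀ = Smap p l (2 * l) (∑ i ∈ Finset.range (n / d - 1),
          ∑ j ∈ Finset.Ico (i + 1) (n / d), δ ^ p ^ (k * j) * a ^ p ^ (k * i)) →
        x₀ ∈ Ffield p n ∧ Tmap p l k x₀ = a) := by
  have haF : a ^ p ^ n = a := ha
  constructor
  · constructor
    · rintro ⟨x, hx, rfl⟩
      exact trace_of_tlk p hn hk hl hlk hd hL hpk hx
    · intro hTa
      have hdpos : 0 < d := hd ▸ Nat.gcd_pos_of_pos_left k hn
      have hnd : d ∣ n := hd ▸ Nat.gcd_dvd_left n k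
      obtain ⟨δ, hδF, hTδ⟩ := exists_delta p hn hdpos hnd
      obtain ⟨hm, hv⟩ := main_solution p hn hk hl hlk hd haF hδF hTa hTδ
      exact ⟨_, hm, hv⟩
  · intro hTa δ hδF hTδ x₀ hx₀
    rw [hx₀]
    exact main_solution p hn hk hl hlk hd haF hδF hTa hTδ
end
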